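/- Let r be a natural number and K : ℝ → ℝ be integrable with compact support. Then the following are equivalent: (i) ∫_ℝ K(x) dx = 1 and ∫_ℝ K(x) x^k dx = 0 for all integers k with 1 ≤ k ≤ r; (ii) for every x ∈ ℝ and every integer k with 0 ≤ k ≤ r, ∫_ℝ K(x − y) y^k dy = x^k. -/
import Mathlib


open MeasureTheory

lemma int_mul_pow {K : ℝ → ℝ} (hK : Integrable K) (hsupp : HasCompactSupport K) (j : ℕ) :
    Integrable (fun t : ℝ => K t * t ^ j) := by
  obtain ⟨C, hC⟩ := hsupp.isCompact.exists_bound_of_continuousOn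
    ((continuous_pow j).continuousOn (s := tsupport K))
  refine (hK.norm.const_mul (max C 0)).mono'
    (hK.aestronglyMeasurable.mul ((continuous_pow j).aestronglyMeasurable)) ?_
  filter_upwards with t
  by_cases ht : t ∈ tsupport K
  · have h1 := hC t ht
    calc ‖K t * t ^ j‖ = ‖K t‖ * ‖t ^ j‖ := norm_mul _ _
    _ ≤ ‖K t‖ * max C 0 := by
        exact mul_le_mul_of_nonneg_left (h1.trans (le_max_left _ _)) (norm_nonneg _)
    _ = max C 0 * ‖K t‖ := mul_comm _ _
  · have hz : K t = 0 := image_eq_zero_of_notMem_tsupport ht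
    simp [hz]

lemma int_mul_pow' {K : ℝ → ℝ} (hK : Integrable K) (hsupp : HasCompactSupport K) (j : ℕ) :
    Integrable (fun t : ℝ => K t * t ^ j) := int_mul_pow hK hsupp j

lemma key {K : ℝ → ℝ} (hK : Integrable K) (hsupp : HasCompactSupport K) (x : ℝ) (k : ℕ) :
    (∫ y : ℝ, K (x - y) * y ^ k) =
      ∑ j ∈ Finset.range (k + 1),
        x ^ j * (-1 : ℝ) ^ (k - j) * (k.choose j : ℝ) * ∫ t : ℝ, K t * t ^ (k - j) := by
  have h1 : (∫ y : ℝ, K (x - y) * y ^ k) = ∫ t : ℝ, K t * (x - t) ^ k := by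
    have := MeasureTheory.integral_sub_left_eq_self (fun t : ℝ => K t * (x - t) ^ k) MeasureTheory.volume x
    simpa using this
  rw [h1]
  have h2 : ∀ t : ℝ, K t * (x - t) ^ k =
      ∑ j ∈ Finset.range (k + 1),
        x ^ j * (-1 : ℝ) ^ (k - j) * (k.choose j : ℝ) * (K t * t ^ (k - j)) := by
    intro t
    rw [sub_eq_add_neg, add_pow, Finset.mul_sum]
    refine Finset.sum_congr rfl fun j hj => ?_
    rw [neg_pow]
    ring
  simp_rw [h2]
  rw [integral_finset_sum _ fun j hj => ((int_mul_pow hK hsupp (k - j)).const_mul _)]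
  refine Finset.sum_congr rfl fun j hj => ?_
  rw [integral_const_mul]

theorem stmt_0 (r : ℕ) (K : ℝ → ℝ) (hK : Integrable K) (hsupp : HasCompactSupport K) :
    ((∫ x : ℝ, K x) = 1 ∧ ∀ k : ℕ, 1 ≤ k → k ≤ r → (∫ x : ℝ, K x * x ^ k) = 0) ↔
      (∀ x : ℝ, ∀ k : ℕ, k ≤ r → (∫ y : ℝ, K (x - y) * y ^ k) = x ^ k) := by
  constructor
  · rintro ⟨h0, hm⟩ x k hk
    rw [key hK hsupp]
    rw [Finset.sum_eq_single k]
    · simp [h0]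
    · intro j hj hne
      have hjk : j < k := lt_of_le_of_ne (Nat.lt_succ_iff.mp (Finset.mem_range.mp hj)) hne
      rw [hm (k - j) (by omega) (by omega)]
      ring
    · intro h; exact absurd (Finset.self_mem_range_succ k) h
  · intro h
    constructor
    · have h0 := h 0 0 r.zero_le
      simp only [zero_sub, pow_zero, mul_one] at h0
      rwa [MeasureTheory.integral_neg_eq_self K] at h0
    · intro k hk1 hkr
      have h0 := h 0 k hkr
      rw [zero_pow (by omega)] at h0
      simp only [zero_sub] at h0
      have h1 : (∫ y : ℝ, K (-y) * y ^ k) = ∫ y : ℝ, K y * (-y) ^ k := by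
        have := MeasureTheory.integral_neg_eq_self (fun y : ℝ => K y * (-y) ^ k) MeasureTheory.volume
        simpa using this
      rw [h1] at h0
      have h2 : ∀ y : ℝ, K y * (-y) ^ k = (-1 : ℝ) ^ k * (K y * y ^ k) := by
        intro y; rw [neg_pow]; ring
      simp_rw [h2] at h0
      rw [integral_const_mul] at h0
      have hne : ((-1 : ℝ) ^ k) ≠ 0 := by positivity
      exact (mul_eq_zero.mp h0).resolve_left hne
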